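/- arXiv:math/0307288 — 5 statements merged into one kernel-verified Lean document; each statement's English description precedes it below -/
import Mathlib

section
/- Let v_0, ..., v_k be points in ℝ^n whose convex hull contains the origin in its interior. Then the integral ∫_{ℝ^n} 1/(∑_{i=0}^k e^{⟨v_i, y⟩}) dy is finite. -/
open MeasureTheory
set_option maxHeartbeats 1000000

lemma exp_neg_integrable_aux {n : ℕ} {c : ℝ} (hc : 0 < c) :
    Integrable (fun y : EuclideanSpace ℝ (Fin n) => Real.exp (-(c * ‖y‖))) := by
  set m : ℕ := n + 1 with hm
  have h1 : Integrable (fun y : EuclideanSpace ℝ (Fin n) => (1 + ‖y‖) ^ (-(m : ℝ))) := by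
    apply integrable_one_add_norm
    rw [finrank_euclideanSpace]
    simp [hm]
  set C : ℝ := Real.exp c * (m.factorial : ℝ) / c ^ m with hC
  refine ((h1.const_mul C).mono' ?_ ?_)
  · exact (Real.continuous_exp.comp (continuous_norm.const_smul c).neg).aestronglyMeasurable
  · filter_upwards with y
    have ht : (0 : ℝ) ≤ ‖y‖ := norm_nonneg y
    set s : ℝ := 1 + ‖y‖ with hs
    have hs1 : (1 : ℝ) ≤ s := by simp [hs, ht]
    have hs0 : (0 : ℝ) < s := lt_of_lt_of_le one_pos hs1
    have hcs : (0 : ℝ) < c * s := mul_pos hc hs0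
    have hpow : (c * s) ^ m / (m.factorial : ℝ) ≤ Real.exp (c * s) := by
      refine le_trans ?_ (Real.sum_le_exp_of_nonneg hcs.le (m + 1))
      have := Finset.single_le_sum (f := fun i => (c * s) ^ i / (i.factorial : ℝ))
        (fun i _ => by positivity) (Finset.self_mem_range_succ m)
      simpa using this
    have hinv : (Real.exp (c * s))⁻¹ ≤ (m.factorial : ℝ) / (c * s) ^ m := by
      rw [div_eq_mul_inv]
      rw [inv_le_iff_one_le_mul₀ (Real.exp_pos _)] at *
      · calc (1 : ℝ) = ((c*s)^m / (m.factorial : ℝ)) * ((m.factorial : ℝ) * ((c*s)^m)⁻¹) := by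
              field_simp
          _ ≤ Real.exp (c*s) * ((m.factorial : ℝ) * ((c*s)^m)⁻¹) := by
              apply mul_le_mul_of_nonneg_right hpow
              positivity
          _ = (m.factorial : ℝ) * ((c*s)^m)⁻¹ * Real.exp (c*s) := by ring
    have key : Real.exp (-(c * ‖y‖)) ≤ C * s ^ (-(m : ℝ)) := by
      have : Real.exp (-(c * ‖y‖)) = Real.exp c * (Real.exp (c * s))⁻¹ := by
        rw [← Real.exp_neg, ← Real.exp_add]
        congr 1
        simp [hs]; ring
      rw [this, Real.rpow_neg hs0.le, Real.rpow_natCast]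
      calc Real.exp c * (Real.exp (c*s))⁻¹
          ≤ Real.exp c * ((m.factorial : ℝ) / (c * s) ^ m) :=
            mul_le_mul_of_nonneg_left hinv (Real.exp_pos _).le
        _ = C * (s ^ m)⁻¹ := by
            rw [hC, mul_pow]
            field_simp
    simpa [Real.abs_exp] using key

theorem stmt_0 {n k : ℕ} (v : Fin (k + 1) → EuclideanSpace ℝ (Fin n))
    (h0 : (0 : EuclideanSpace ℝ (Fin n)) ∈ interior (convexHull ℝ (Set.range v))) :
    Integrable (fun y : EuclideanSpace ℝ (Fin n) =>
      (∑ i, Real.exp (inner ℝ (v i) y : ℝ))⁻¹) := by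
  obtain ⟨ε, hε, hball⟩ := Metric.isOpen_iff.mp isOpen_interior 0 h0
  have hballsub : Metric.ball (0 : EuclideanSpace ℝ (Fin n)) ε ⊆ convexHull ℝ (Set.range v) :=
    hball.trans interior_subset
  set c : ℝ := ε / 2 with hc
  have hcpos : 0 < c := by positivity
  have key : ∀ y : EuclideanSpace ℝ (Fin n), ∃ i, c * ‖y‖ ≤ (inner ℝ (v i) y : ℝ) := by
    intro y
    rcases eq_or_ne y 0 with rfl | hy
    · exact ⟨0, by simp⟩
    · have hne : (Finset.univ : Finset (Fin (k+1))).Nonempty := Finset.univ_nonempty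
      set M : ℝ := Finset.univ.sup' hne (fun i => (inner ℝ (v i) y : ℝ)) with hM
      have hsub : convexHull ℝ (Set.range v) ⊆ {x : EuclideanSpace ℝ (Fin n) | (inner ℝ x y : ℝ) ≤ M} := by
        apply convexHull_min
        · rintro x ⟨i, rfl⟩
          exact Finset.le_sup' (fun i => (inner ℝ (v i) y : ℝ)) (Finset.mem_univ i)
        · exact convex_halfSpace_le
            ⟨fun a b => inner_add_left a b y, fun r a => real_inner_smul_left a y r⟩ M
      set x₀ : EuclideanSpace ℝ (Fin n) := c • ‖y‖⁻¹ • y with hx₀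
      have hynorm : (0:ℝ) < ‖y‖ := norm_pos_iff.mpr hy
      have hx₀mem : x₀ ∈ Metric.ball (0 : EuclideanSpace ℝ (Fin n)) ε := by
        simp only [Metric.mem_ball, dist_zero_right, hx₀, norm_smul, norm_inv, norm_norm,
          Real.norm_eq_abs, abs_of_pos hcpos, abs_norm]
        rw [inv_mul_cancel₀ hynorm.ne', mul_one]
        simp [hc]; linarith
      have hle : (inner ℝ x₀ y : ℝ) ≤ M := hsub (hballsub hx₀mem)
      have hx₀inner : (inner ℝ x₀ y : ℝ) = c * ‖y‖ := by
        rw [hx₀, real_inner_smul_left, real_inner_smul_left, real_inner_self_eq_norm_sq]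
        field_simp
      obtain ⟨i, _, hi⟩ := Finset.exists_mem_eq_sup' hne (fun i => (inner ℝ (v i) y : ℝ))
      exact ⟨i, by rw [← hx₀inner]; rw [hM, hi] at hle; exact hle⟩
  have hcont : Continuous (fun y : EuclideanSpace ℝ (Fin n) =>
      (∑ i, Real.exp (inner ℝ (v i) y : ℝ))⁻¹) := by
    apply Continuous.inv₀
    · exact continuous_finset_sum _ fun i _ =>
        Real.continuous_exp.comp (continuous_const.inner continuous_id)
    · intro y
      have : (0:ℝ) < ∑ i, Real.exp (inner ℝ (v i) y : ℝ) :=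
        Finset.sum_pos (fun i _ => Real.exp_pos _) Finset.univ_nonempty
      exact this.ne'
  refine (exp_neg_integrable_aux hcpos).mono' hcont.aestronglyMeasurable ?_
  filter_upwards with y
  obtain ⟨i, hi⟩ := key y
  have hsum : Real.exp (c * ‖y‖) ≤ ∑ j, Real.exp (inner ℝ (v j) y : ℝ) := by
    calc Real.exp (c * ‖y‖) ≤ Real.exp (inner ℝ (v i) y : ℝ) := Real.exp_le_exp.mpr hi
      _ ≤ ∑ j, Real.exp (inner ℝ (v j) y : ℝ) :=
          Finset.single_le_sum (f := fun j => Real.exp (inner ℝ (v j) y : ℝ)) (fun j _ => (Real.exp_pos _).le) (Finset.mem_univ i)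
  have hpos : (0:ℝ) < ∑ j, Real.exp (inner ℝ (v j) y : ℝ) :=
    Finset.sum_pos (fun j _ => Real.exp_pos _) Finset.univ_nonempty
  rw [Real.norm_eq_abs, abs_of_pos (inv_pos.mpr hpos), Real.exp_neg]
  exact inv_anti₀ (Real.exp_pos _) hsum
end

section
/- Let Σ ⊂ ℝ^n be a compact convex set containing 0 in its interior, let v_0,...,v_k be points with Σ equal to the convex hull of the v_i, and let v ∈ ℝ^n be nonzero. If α ∈ (0,1) satisfies that (-α/(1-α))·v lies in the interior of Σ, then ∫_{ℝ^n} e^{-α⟨v,y⟩}/(∑_i e^{⟨v_i,y⟩})^{1-α} dy < ∞. -/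
open MeasureTheory

lemma exp_neg_mul_norm_integrable {E : Type*} [NormedAddCommGroup E] [NormedSpace ℝ E]
    [FiniteDimensional ℝ E] [MeasurableSpace E] [BorelSpace E] (μ : Measure E)
    [μ.IsAddHaarMeasure] {c : ℝ} (hc : 0 < c) :
    Integrable (fun y : E => Real.exp (-c * ‖y‖)) μ := by
  set r : ℝ := Module.finrank ℝ E + 1 with hr
  have hr0 : 0 < r := by positivity
  have hnr : (Module.finrank ℝ E : ℝ) < r := by simp [hr]
  set ε : ℝ := min 1 (c / r) with hε
  have hε0 : 0 < ε := lt_min one_pos (by positivity)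
  refine ((integrable_one_add_norm hnr).const_mul (ε ^ (-r))).mono'
    (Measurable.aestronglyMeasurable (by fun_prop)) (Filter.Eventually.of_forall fun y => ?_)
  rw [Real.norm_eq_abs, abs_of_pos (Real.exp_pos _)]
  have h1 : (0:ℝ) < 1 + ‖y‖ := by positivity
  have key : (ε * (1 + ‖y‖)) ^ r ≤ Real.exp (c * ‖y‖) := by
    have h2 : ε * (1 + ‖y‖) ≤ 1 + (c / r) * ‖y‖ := by
      have ha := min_le_left 1 (c / r)
      have hb := min_le_right 1 (c / r)
      nlinarith [norm_nonneg y]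
    have h3 : (1:ℝ) + (c / r) * ‖y‖ ≤ Real.exp ((c / r) * ‖y‖) := by
      have := Real.add_one_le_exp ((c / r) * ‖y‖); linarith
    calc (ε * (1 + ‖y‖)) ^ r ≤ (Real.exp ((c / r) * ‖y‖)) ^ r :=
          Real.rpow_le_rpow (by positivity) (h2.trans h3) hr0.le
      _ = Real.exp (c * ‖y‖) := by
          rw [Real.rpow_def_of_pos (Real.exp_pos _), Real.log_exp]
          congr 1; field_simp
  have key2 : Real.exp (-c * ‖y‖) ≤ ε ^ (-r) * (1 + ‖y‖) ^ (-r) := by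
    rw [Real.rpow_neg hε0.le, Real.rpow_neg h1.le, neg_mul, Real.exp_neg,
      ← mul_inv, ← Real.mul_rpow hε0.le h1.le]
    exact inv_anti₀ (Real.rpow_pos_of_pos (by positivity) r) key
  exact key2

set_option maxHeartbeats 1000000 in
theorem stmt_2 {n k : ℕ} (v : Fin (k + 1) → EuclideanSpace ℝ (Fin n))
    (S : Set (EuclideanSpace ℝ (Fin n)))
    (hS : S = convexHull ℝ (Set.range v))
    (hcpt : IsCompact S) (hconv : Convex ℝ S)
    (h0 : (0 : EuclideanSpace ℝ (Fin n)) ∈ interior S)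
    (u : EuclideanSpace ℝ (Fin n)) (hu : u ≠ 0)
    (α : ℝ) (hα : α ∈ Set.Ioo (0 : ℝ) 1)
    (hmem : (-(α / (1 - α))) • u ∈ interior S) :
    Integrable (fun y : EuclideanSpace ℝ (Fin n) =>
      Real.exp (-α * (inner ℝ u y : ℝ)) /
        (∑ i, Real.exp (inner ℝ (v i) y : ℝ)) ^ (1 - α)) := by
  obtain ⟨hα0, hα1⟩ := hα
  have h1α : (0:ℝ) < 1 - α := by linarith
  set w : EuclideanSpace ℝ (Fin n) := (-(α / (1 - α))) • u with hw
  obtain ⟨ε, hε0, hball⟩ := Metric.isOpen_iff.mp isOpen_interior w hmem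
  set c : ℝ := (1 - α) * (ε / 2) with hc
  have hc0 : 0 < c := by positivity
  -- pointwise bound
  have hbound : ∀ y : EuclideanSpace ℝ (Fin n),
      Real.exp (-α * (inner ℝ u y : ℝ)) /
        (∑ i, Real.exp (inner ℝ (v i) y : ℝ)) ^ (1 - α) ≤ Real.exp (-c * ‖y‖) := by
    intro y
    -- choose maximizing index
    obtain ⟨j, hj⟩ := Finite.exists_max (fun i : Fin (k + 1) => (inner ℝ (v i) y : ℝ))
    -- support function inequality
    have hsup : ∀ x ∈ S, (inner ℝ x y : ℝ) ≤ inner ℝ (v j) y := by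
      intro x hx
      rw [hS] at hx
      have hconv' : Convex ℝ {z : EuclideanSpace ℝ (Fin n) | (inner ℝ z y : ℝ) ≤ inner ℝ (v j) y} := by
        intro a ha b hb s t hs ht hst
        simp only [Set.mem_setOf_eq, inner_add_left, real_inner_smul_left] at *
        calc s * (inner ℝ a y : ℝ) + t * inner ℝ b y
            ≤ s * (inner ℝ (v j) y : ℝ) + t * inner ℝ (v j) y :=
              add_le_add (mul_le_mul_of_nonneg_left ha hs) (mul_le_mul_of_nonneg_left hb ht)
          _ = inner ℝ (v j) y := by rw [← add_mul, hst, one_mul]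
      have : convexHull ℝ (Set.range v) ⊆
          {z : EuclideanSpace ℝ (Fin n) | (inner ℝ z y : ℝ) ≤ inner ℝ (v j) y} := by
        apply convexHull_min _ hconv'
        rintro _ ⟨i, rfl⟩
        exact hj i
      exact this hx
    have hkey : (inner ℝ w y : ℝ) + (ε / 2) * ‖y‖ ≤ inner ℝ (v j) y := by
      rcases eq_or_ne y 0 with rfl | hy
      · simpa using hsup w (interior_subset hmem)
      · have hyn : (0:ℝ) < ‖y‖ := norm_pos_iff.mpr hy
        set z : EuclideanSpace ℝ (Fin n) := w + ((ε / 2) * ‖y‖⁻¹) • y with hz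
        have hzS : z ∈ S := by
          apply interior_subset
          apply hball
          rw [Metric.mem_ball, hz, dist_eq_norm]
          simp only [add_sub_cancel_left, norm_smul]
          rw [Real.norm_eq_abs, abs_of_pos (by positivity)]
          rw [mul_assoc, inv_mul_cancel₀ hyn.ne', mul_one]
          linarith
        have := hsup z hzS
        rw [hz, inner_add_left] at this
        have h2 : (inner ℝ (((ε / 2) * ‖y‖⁻¹) • y) y : ℝ) = (ε / 2) * ‖y‖ := by
          rw [real_inner_smul_left, real_inner_self_eq_norm_sq]
          field_simp
        rw [h2] at this
        exact this
    -- denominator bound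
    have hden : Real.exp ((1 - α) * (inner ℝ (v j) y : ℝ)) ≤
        (∑ i, Real.exp (inner ℝ (v i) y : ℝ)) ^ (1 - α) := by
      have h1 : Real.exp (inner ℝ (v j) y : ℝ) ≤ ∑ i, Real.exp (inner ℝ (v i) y : ℝ) :=
        Finset.single_le_sum (fun (i : Fin (k+1)) _ => (Real.exp_pos ((inner ℝ (v i) y : ℝ))).le) (Finset.mem_univ j)
      calc Real.exp ((1 - α) * (inner ℝ (v j) y : ℝ))
          = (Real.exp (inner ℝ (v j) y : ℝ)) ^ (1 - α) := by
            rw [Real.rpow_def_of_pos (Real.exp_pos _), Real.log_exp, mul_comm]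
        _ ≤ _ := Real.rpow_le_rpow (Real.exp_pos _).le h1 h1α.le
    have hdenpos : (0:ℝ) < (∑ i, Real.exp (inner ℝ (v i) y : ℝ)) ^ (1 - α) :=
      Real.rpow_pos_of_pos (Finset.sum_pos (fun i _ => Real.exp_pos _) Finset.univ_nonempty) _
    have hnum : -α * (inner ℝ u y : ℝ) = (1 - α) * (inner ℝ w y : ℝ) := by
      rw [hw, real_inner_smul_left]; field_simp
    calc Real.exp (-α * (inner ℝ u y : ℝ)) / (∑ i, Real.exp (inner ℝ (v i) y : ℝ)) ^ (1 - α)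
        ≤ Real.exp (-α * (inner ℝ u y : ℝ)) / Real.exp ((1 - α) * (inner ℝ (v j) y : ℝ)) := by
          apply div_le_div_of_nonneg_left (Real.exp_pos _).le (Real.exp_pos _) hden
      _ = Real.exp ((1 - α) * (inner ℝ w y : ℝ) - (1 - α) * (inner ℝ (v j) y : ℝ)) := by
          rw [hnum, ← Real.exp_sub]
      _ ≤ Real.exp (-c * ‖y‖) := by
          apply Real.exp_le_exp.mpr
          have := mul_le_mul_of_nonneg_left hkey h1α.le
          rw [hc]; nlinarith [this]
  refine (exp_neg_mul_norm_integrable volume hc0).mono' ?_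
    (Filter.Eventually.of_forall fun y => ?_)
  · apply Continuous.aestronglyMeasurable
    have hnum : Continuous fun y : EuclideanSpace ℝ (Fin n) =>
        Real.exp (-α * (inner ℝ u y : ℝ)) :=
      Real.continuous_exp.comp (continuous_const.mul (continuous_const.inner continuous_id))
    have hsum : Continuous fun y : EuclideanSpace ℝ (Fin n) =>
        ∑ i, Real.exp (inner ℝ (v i) y : ℝ) :=
      continuous_finset_sum _ fun i _ =>
        Real.continuous_exp.comp (continuous_const.inner continuous_id)
    have hden0 : ∀ y : EuclideanSpace ℝ (Fin n),
        (0:ℝ) < ∑ i, Real.exp (inner ℝ (v i) y : ℝ) := fun y =>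
      Finset.sum_pos (fun i _ => Real.exp_pos _) Finset.univ_nonempty
    exact hnum.div (hsum.rpow_const fun y => Or.inl (hden0 y).ne')
      fun y => (Real.rpow_pos_of_pos (hden0 y) _).ne'
  · rw [Real.norm_eq_abs, abs_of_nonneg (by positivity)]
    exact hbound y
end

section
/- Let v_0,...,v_k ∈ ℝ^n whose convex hull contains 0 in its interior, let v ∈ ℝ^n, and suppose α ∈ (0,1) is such that (-α/(1-α))·v does NOT lie in the closed convex hull Σ of the v_i. Then ∫_{ℝ^n} e^{-α⟨v,y⟩}/(∑_i e^{⟨v_i,y⟩})^{1-α} dy = +∞. -/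
open MeasureTheory Filter Metric

theorem stmt_11 {n k : ℕ} (v : Fin (k + 1) → EuclideanSpace ℝ (Fin n))
    (h0 : (0 : EuclideanSpace ℝ (Fin n)) ∈ interior (convexHull ℝ (Set.range v)))
    (u : EuclideanSpace ℝ (Fin n)) (α : ℝ) (hα : α ∈ Set.Ioo (0 : ℝ) 1)
    (hout : (-(α / (1 - α))) • u ∉ convexHull ℝ (Set.range v)) :
    ∫⁻ y : EuclideanSpace ℝ (Fin n),
        ENNReal.ofReal (Real.exp (-α * (inner ℝ u y : ℝ)) /
          (∑ i, Real.exp (inner ℝ (v i) y : ℝ)) ^ (1 - α)) = ⊤ := by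
  obtain ⟨hα0, hα1⟩ := hα
  set β : ℝ := 1 - α with hβdef
  have hβ0 : (0 : ℝ) < β := by simp only [hβdef]; linarith
  set w : EuclideanSpace ℝ (Fin n) := (-(α / (1 - α))) • u with hwdef
  have hKclosed : IsClosed (convexHull ℝ (Set.range v)) :=
    ((Set.finite_range v).isCompact_convexHull ℝ).isClosed
  obtain ⟨f, c, hfc, hcw⟩ :=
    geometric_hahn_banach_closed_point (convex_convexHull ℝ _) hKclosed hout
  set y₀ : EuclideanSpace ℝ (Fin n) := (InnerProductSpace.toDual ℝ (EuclideanSpace ℝ (Fin n))).symm f with hy₀def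
  have hy₀ : ∀ x : EuclideanSpace ℝ (Fin n), (inner ℝ y₀ x : ℝ) = f x := fun x =>
    InnerProductSpace.toDual_symm_apply
  set ε : ℝ := f w - c with hεdef
  have hε : 0 < ε := by simp only [hεdef]; linarith
  have hfv : ∀ i, f w - f (v i) ≥ ε := by
    intro i
    have := hfc (v i) (subset_convexHull ℝ _ (Set.mem_range_self i))
    simp only [hεdef]; linarith
  set C : ℝ := ‖w‖ + ∑ i, ‖v i‖ with hCdef
  -- pointwise inner ℝ product bound on balls
  have key : ∀ (m : ℕ), ∀ y ∈ ball ((m : ℝ) • y₀) 1, ∀ i,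
      (inner ℝ (v i) y : ℝ) ≤ (inner ℝ w y : ℝ) - ((m : ℝ) * ε - C) := by
    intro m y hy i
    have h1 : (inner ℝ (w - v i) ((m : ℝ) • y₀) : ℝ) = (m : ℝ) * (f w - f (v i)) := by
      rw [real_inner_smul_right, real_inner_comm, hy₀, map_sub]
    have h2 : |(inner ℝ (w - v i) (y - (m : ℝ) • y₀) : ℝ)| ≤ ‖w - v i‖ * ‖y - (m : ℝ) • y₀‖ :=
      abs_real_inner_le_norm _ _
    have hyn : ‖y - (m : ℝ) • y₀‖ ≤ 1 := by
      rw [← dist_eq_norm]; exact (mem_ball.1 hy).le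
    have hnm : ‖w - v i‖ ≤ C := by
      have : ‖v i‖ ≤ ∑ j, ‖v j‖ :=
        Finset.single_le_sum (f := fun j => ‖v j‖) (fun j _ => norm_nonneg _)
          (Finset.mem_univ i)
      calc ‖w - v i‖ ≤ ‖w‖ + ‖v i‖ := norm_sub_le _ _
        _ ≤ C := by simp only [hCdef]; linarith
    have h3 : (inner ℝ (w - v i) (y - (m : ℝ) • y₀) : ℝ) ≥ -C := by
      have hC0 : 0 ≤ C := le_trans (norm_nonneg _) hnm
      have : ‖w - v i‖ * ‖y - (m : ℝ) • y₀‖ ≤ C * 1 :=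
        mul_le_mul hnm hyn (norm_nonneg _) hC0
      have habs := (abs_le.1 h2).1
      nlinarith
    have h4 : (inner ℝ (w - v i) y : ℝ) ≥ (m : ℝ) * ε - C := by
      have hsplit : (inner ℝ (w - v i) y : ℝ)
          = (inner ℝ (w - v i) ((m : ℝ) • y₀) : ℝ) + (inner ℝ (w - v i) (y - (m : ℝ) • y₀) : ℝ) := by
        rw [← inner_add_right]
        congr 1
        abel
      have hm0 : (0 : ℝ) ≤ (m : ℝ) := Nat.cast_nonneg m
      have := hfv i
      nlinarith [h1, h3]
    have : (inner ℝ (w - v i) y : ℝ) = (inner ℝ w y : ℝ) - (inner ℝ (v i) y : ℝ) := by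
      rw [inner_sub_left]
    linarith [h4, this.symm.le, this.le]
  -- the integrand
  set g : EuclideanSpace ℝ (Fin n) → ENNReal := fun y =>
    ENNReal.ofReal (Real.exp (-α * (inner ℝ u y : ℝ)) /
      (∑ i, Real.exp (inner ℝ (v i) y : ℝ)) ^ (1 - α)) with hgdef
  have hgcont : Continuous fun y : EuclideanSpace ℝ (Fin n) => Real.exp (-α * (inner ℝ u y : ℝ)) /
      (∑ i, Real.exp (inner ℝ (v i) y : ℝ)) ^ (1 - α) := by
    have hnum : Continuous fun y : EuclideanSpace ℝ (Fin n) => Real.exp (-α * (inner ℝ u y : ℝ)) :=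
      Real.continuous_exp.comp (continuous_const.mul (continuous_const.inner continuous_id))
    have hsum : Continuous fun y : EuclideanSpace ℝ (Fin n) => ∑ i, Real.exp (inner ℝ (v i) y : ℝ) :=
      continuous_finset_sum _ fun i _ =>
        Real.continuous_exp.comp (continuous_const.inner continuous_id)
    have hden : Continuous fun y : EuclideanSpace ℝ (Fin n) => (∑ i, Real.exp (inner ℝ (v i) y : ℝ)) ^ (1 - α) :=
      hsum.rpow_const fun y => Or.inr (by linarith)
    exact hnum.div hden fun y => by
      have : 0 < ∑ i, Real.exp (inner ℝ (v i) y : ℝ) :=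
        Finset.sum_pos (fun i _ => Real.exp_pos _) Finset.univ_nonempty
      positivity
  have hgmeas : Measurable g := ENNReal.measurable_ofReal.comp hgcont.measurable
  -- lower bound the value of g on the ball
  have hptwise : ∀ (m : ℕ), ∀ y ∈ ball ((m : ℝ) • y₀) 1,
      Real.exp (β * ((m : ℝ) * ε - C)) / ((k + 1 : ℝ)) ^ β
        ≤ Real.exp (-α * (inner ℝ u y : ℝ)) /
          (∑ i, Real.exp (inner ℝ (v i) y : ℝ)) ^ (1 - α) := by
    intro m y hy
    have hW : -α * (inner ℝ u y : ℝ) = β * (inner ℝ w y : ℝ) := by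
      rw [hwdef, real_inner_smul_left, hβdef]
      field_simp
    set W : ℝ := (inner ℝ w y : ℝ)
    have hsum : ∑ i, Real.exp (inner ℝ (v i) y : ℝ)
        ≤ (k + 1 : ℝ) * Real.exp (W - ((m : ℝ) * ε - C)) := by
      calc ∑ i, Real.exp (inner ℝ (v i) y : ℝ)
          ≤ ∑ _i : Fin (k + 1), Real.exp (W - ((m : ℝ) * ε - C)) :=
            Finset.sum_le_sum fun i _ => Real.exp_le_exp.2 (key m y hy i)
        _ = (k + 1 : ℝ) * Real.exp (W - ((m : ℝ) * ε - C)) := by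
            rw [Finset.sum_const, Finset.card_univ, Fintype.card_fin, nsmul_eq_mul]
            push_cast; ring
    have hsum0 : 0 < ∑ i, Real.exp (inner ℝ (v i) y : ℝ) :=
      Finset.sum_pos (fun i _ => Real.exp_pos _) Finset.univ_nonempty
    have hpow : (∑ i, Real.exp (inner ℝ (v i) y : ℝ)) ^ (1 - α)
        ≤ ((k + 1 : ℝ) * Real.exp (W - ((m : ℝ) * ε - C))) ^ β :=
      Real.rpow_le_rpow hsum0.le hsum hβ0.le
    have hrw : ((k + 1 : ℝ) * Real.exp (W - ((m : ℝ) * ε - C))) ^ β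
        = (k + 1 : ℝ) ^ β * Real.exp (β * (W - ((m : ℝ) * ε - C))) := by
      rw [Real.mul_rpow (by positivity) (Real.exp_pos _).le,
        Real.rpow_def_of_pos (Real.exp_pos _), Real.log_exp, mul_comm]
      ring_nf
    have hd0 : 0 < (∑ i, Real.exp (inner ℝ (v i) y : ℝ)) ^ (1 - α) := by positivity
    have step1 : Real.exp (β * W) /
          ((k + 1 : ℝ) ^ β * Real.exp (β * (W - ((m : ℝ) * ε - C))))
        ≤ Real.exp (-α * (inner ℝ u y : ℝ)) /
          (∑ i, Real.exp (inner ℝ (v i) y : ℝ)) ^ (1 - α) := by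
      rw [hW]
      exact div_le_div_of_nonneg_left (Real.exp_pos _).le hd0 (hrw ▸ hpow)
    have hval : Real.exp (β * W) /
          ((k + 1 : ℝ) ^ β * Real.exp (β * (W - ((m : ℝ) * ε - C))))
        = Real.exp (β * ((m : ℝ) * ε - C)) / ((k + 1 : ℝ)) ^ β := by
      rw [show β * W = β * (W - ((m : ℝ) * ε - C)) + β * ((m : ℝ) * ε - C) by ring,
        Real.exp_add]
      rw [div_eq_div_iff (by positivity) (by positivity)]
      ring
    linarith [step1, hval.ge, hval.le]
  -- the lintegral dominates each ball contribution
  set V : ENNReal := volume (ball (0 : (EuclideanSpace ℝ (Fin n))) 1) with hVdef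
  have hV0 : V ≠ 0 := (measure_ball_pos volume 0 one_pos).ne'
  have hlb : ∀ m : ℕ,
      V * ENNReal.ofReal (Real.exp (β * ((m : ℝ) * ε - C)) / ((k + 1 : ℝ)) ^ β)
        ≤ ∫⁻ y : EuclideanSpace ℝ (Fin n), g y := by
    intro m
    calc V * ENNReal.ofReal (Real.exp (β * ((m : ℝ) * ε - C)) / ((k + 1 : ℝ)) ^ β)
        = ∫⁻ _y in ball ((m : ℝ) • y₀) 1,
            ENNReal.ofReal (Real.exp (β * ((m : ℝ) * ε - C)) / ((k + 1 : ℝ)) ^ β) := by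
          rw [setLIntegral_const, Measure.addHaar_ball_center, hVdef, mul_comm]
      _ ≤ ∫⁻ y in ball ((m : ℝ) • y₀) 1, g y :=
          setLIntegral_mono hgmeas fun y hy =>
            ENNReal.ofReal_le_ofReal (hptwise m y hy)
      _ ≤ ∫⁻ y : EuclideanSpace ℝ (Fin n), g y := setLIntegral_le_lintegral _ _
  -- RHS tends to ⊤
  have htend : Tendsto (fun m : ℕ =>
      V * ENNReal.ofReal (Real.exp (β * ((m : ℝ) * ε - C)) / ((k + 1 : ℝ)) ^ β))
      atTop (nhds ⊤) := by
    have h1 : Tendsto (fun m : ℕ => β * ((m : ℝ) * ε - C)) atTop atTop := by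
      have : Tendsto (fun m : ℕ => (m : ℝ) * ε - C) atTop atTop :=
        tendsto_atTop_add_const_right _ (-C)
          (tendsto_natCast_atTop_atTop.atTop_mul_const hε) |>.congr fun m => by ring
      exact this.const_mul_atTop hβ0
    have h2 : Tendsto (fun m : ℕ =>
        Real.exp (β * ((m : ℝ) * ε - C)) / ((k + 1 : ℝ)) ^ β) atTop atTop :=
      (Real.tendsto_exp_atTop.comp h1).atTop_div_const (by positivity)
    have h3 := ENNReal.tendsto_ofReal_atTop.comp h2
    have h4 := ENNReal.Tendsto.const_mul (a := V) h3 (Or.inl (by simp))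
    rwa [ENNReal.mul_top hV0] at h4
  exact eq_top_iff.2 (le_of_tendsto htend (Eventually.of_forall hlb))
end

section
/- Let v_0,...,v_k span ℝ^n with 0 in the interior of their convex hull Σ, let v ≠ 0 with -t₀ v ∈ ∂Σ where t₀ = sup{t ≥ 0 : -tv ∈ Σ}, and set r = t₀ (so r = |w_v|/|v| where w_v = -t₀v). Then sup{α ∈ (0,1) : ∫_{ℝ^n} e^{-α⟨v,y⟩}/(∑_i e^{⟨v_i,y⟩})^{1-α} dy < ∞} = r/(1+r). -/
open MeasureTheory Real Finset
open scoped ENNReal NNReal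

lemma pow_div_fact_le_exp (m : ℕ) {x : ℝ} (hx : 0 ≤ x) :
    x ^ m / m.factorial ≤ Real.exp x := by
  calc x ^ m / m.factorial ≤ ∑ i ∈ Finset.range (m+1), x ^ i / i.factorial := by
        refine Finset.single_le_sum (f := fun i => x ^ i / i.factorial)
          (fun i _ => by positivity) (Finset.self_mem_range_succ m)
    _ ≤ Real.exp x := Real.sum_le_exp_of_nonneg hx _

lemma integrable_exp_neg_mul_norm' {n : ℕ} {c : ℝ} (hc : 0 < c) :
    Integrable (fun x : EuclideanSpace ℝ (Fin n) => Real.exp (-(c * ‖x‖))) := by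
  set m := n + 1 with hm
  have hnr : ((Module.finrank ℝ (EuclideanSpace ℝ (Fin n)) : ℝ)) < (m : ℝ) := by
    rw [finrank_euclideanSpace, Fintype.card_fin]
    exact_mod_cast Nat.lt_succ_self n
  refine ((integrable_one_add_norm hnr).const_mul
    (Real.exp c * m.factorial / c ^ m)).mono' ?_ (Filter.Eventually.of_forall fun x => ?_)
  · exact (Real.continuous_exp.comp ((continuous_const.mul continuous_norm).neg)).aestronglyMeasurable
  · have ht : (0:ℝ) ≤ ‖x‖ := norm_nonneg x
    have h1 : (0:ℝ) < 1 + ‖x‖ := by linarith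
    rw [Real.norm_eq_abs, abs_of_pos (Real.exp_pos _)]
    have key : (c * (1 + ‖x‖)) ^ m / m.factorial ≤ Real.exp (c * (1 + ‖x‖)) :=
      pow_div_fact_le_exp m (by positivity)
    have h2 : Real.exp (-(c * ‖x‖)) = Real.exp c / Real.exp (c * (1 + ‖x‖)) := by
      rw [← Real.exp_sub]; ring_nf
    rw [h2, Real.rpow_neg h1.le, Real.rpow_natCast, div_le_iff₀ (Real.exp_pos _)]
    have hB : (0:ℝ) ≤ Real.exp c * ↑m.factorial / c ^ m * ((1 + ‖x‖) ^ m)⁻¹ := by positivity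
    calc Real.exp c
        = ((c*(1+‖x‖))^m / m.factorial) *
          (Real.exp c * ↑m.factorial / c ^ m * ((1 + ‖x‖) ^ m)⁻¹) := by
          rw [mul_pow]; field_simp
      _ ≤ Real.exp (c * (1 + ‖x‖)) *
          (Real.exp c * ↑m.factorial / c ^ m * ((1 + ‖x‖) ^ m)⁻¹) :=
          mul_le_mul_of_nonneg_right key hB
      _ = Real.exp c * ↑m.factorial / c ^ m * ((1 + ‖x‖) ^ m)⁻¹ * Real.exp (c * (1+‖x‖)) := by
          ring

variable {n k : ℕ}

local notation "E" => EuclideanSpace ℝ (Fin n)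

lemma hull_inner_le (vs : Fin (k+1) → E) (y : E) {x : E}
    (hx : x ∈ convexHull ℝ (Set.range vs)) :
    inner ℝ x y ≤ Finset.univ.sup' Finset.univ_nonempty (fun i => (inner ℝ (vs i) y : ℝ)) := by
  set M := Finset.univ.sup' Finset.univ_nonempty (fun i => (inner ℝ (vs i) y : ℝ))
  have hconv : Convex ℝ {z : E | (inner ℝ z y : ℝ) ≤ M} := by
    refine convex_halfSpace_le ⟨fun a b => ?_, fun c a => ?_⟩ M
    · exact inner_add_left a b y
    · exact real_inner_smul_left a y c
  have : convexHull ℝ (Set.range vs) ⊆ {z : E | (inner ℝ z y : ℝ) ≤ M} := by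
    refine convexHull_min ?_ hconv
    rintro _ ⟨i, rfl⟩
    exact Finset.le_sup' (f := fun i => (inner ℝ (vs i) y : ℝ)) (Finset.mem_univ i)
  exact this hx

lemma dir1 (vs : Fin (k+1) → E) (v : E) {α : ℝ} (hα : α ∈ Set.Ioo (0:ℝ) 1)
    (hint : -(α/(1-α)) • v ∈ interior (convexHull ℝ (Set.range vs))) :
    Integrable (fun y : E => Real.exp (-α * (inner ℝ v y : ℝ)) /
      (∑ i, Real.exp (inner ℝ (vs i) y : ℝ)) ^ (1 - α)) := by
  obtain ⟨hα0, hα1⟩ := hα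
  have h1α : (0:ℝ) < 1 - α := by linarith
  set β := α / (1 - α) with hβ
  have hαβ : (1 - α) * β = α := by rw [hβ]; field_simp
  obtain ⟨ε, hε, hball⟩ := Metric.mem_nhds_iff.mp (mem_interior_iff_mem_nhds.mp hint)
  set M : E → ℝ := fun y => Finset.univ.sup' Finset.univ_nonempty
    (fun i => (inner ℝ (vs i) y : ℝ)) with hM
  have hMlow : ∀ y : E, -β * (inner ℝ v y : ℝ) + ε/2 * ‖y‖ ≤ M y := by
    intro y
    rcases eq_or_ne y 0 with rfl | hy
    · have h1 : (inner ℝ v (0:E) : ℝ) = 0 := inner_zero_right v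
      have h2 : (inner ℝ (vs 0) (0:E) : ℝ) = 0 := inner_zero_right (vs 0)
      have h3 : (inner ℝ (vs 0) (0:E) : ℝ) ≤ M 0 :=
        Finset.le_sup' (f := fun i => (inner ℝ (vs i) (0:E) : ℝ)) (Finset.mem_univ 0)
      rw [h1]; rw [h2] at h3
      simp only [norm_zero, mul_zero, add_zero]
      linarith
    · have hyn : (0:ℝ) < ‖y‖ := norm_pos_iff.mpr hy
      set p : E := -β • v + (ε/2 * ‖y‖⁻¹) • y with hp
      have hpmem : p ∈ convexHull ℝ (Set.range vs) := by
        apply hball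
        rw [Metric.mem_ball, dist_eq_norm]
        have : p - -β • v = (ε/2 * ‖y‖⁻¹) • y := by rw [hp]; abel
        rw [this, norm_smul]
        rw [Real.norm_eq_abs, abs_of_pos (by positivity)]
        rw [mul_assoc, inv_mul_cancel₀ hyn.ne', mul_one]
        linarith
      have := hull_inner_le vs y hpmem
      have hpy : (inner ℝ p y : ℝ) = -β * (inner ℝ v y : ℝ) + ε/2 * ‖y‖ := by
        rw [hp, inner_add_left, real_inner_smul_left, real_inner_smul_left,
          real_inner_self_eq_norm_mul_norm]
        field_simp
      rw [hpy] at this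
      exact this
  set c : ℝ := (1 - α) * (ε/2) with hc
  have hcpos : (0:ℝ) < c := by positivity
  have hSpos : ∀ y : E, (0:ℝ) < ∑ i, Real.exp (inner ℝ (vs i) y : ℝ) := fun y =>
    Finset.sum_pos (fun i _ => Real.exp_pos _) Finset.univ_nonempty
  have hbound : ∀ y : E, Real.exp (-α * (inner ℝ v y : ℝ)) /
      (∑ i, Real.exp (inner ℝ (vs i) y : ℝ)) ^ (1 - α) ≤ Real.exp (-(c * ‖y‖)) := by
    intro y
    have hSM : Real.exp (M y) ≤ ∑ i, Real.exp (inner ℝ (vs i) y : ℝ) := by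
      obtain ⟨i, -, hi⟩ := Finset.exists_mem_eq_sup' Finset.univ_nonempty
        (fun i => (inner ℝ (vs i) y : ℝ))
      have hMy : M y = inner ℝ (vs i) y := hi
      rw [hMy]
      exact Finset.single_le_sum (f := fun i => Real.exp (inner ℝ (vs i) y : ℝ))
        (fun i _ => (Real.exp_pos _).le) (Finset.mem_univ i)
    have hrpow : Real.exp ((1-α) * M y) ≤ (∑ i, Real.exp (inner ℝ (vs i) y : ℝ)) ^ (1 - α) := by
      calc Real.exp ((1-α) * M y) = Real.exp (M y * (1-α)) := by rw [mul_comm]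
        _ = Real.exp (M y) ^ (1-α) := Real.exp_mul _ _
        _ ≤ _ := Real.rpow_le_rpow (Real.exp_pos _).le hSM h1α.le
    calc Real.exp (-α * (inner ℝ v y : ℝ)) / (∑ i, Real.exp (inner ℝ (vs i) y : ℝ)) ^ (1 - α)
        ≤ Real.exp (-α * (inner ℝ v y : ℝ)) / Real.exp ((1-α) * M y) :=
          div_le_div_of_nonneg_left (Real.exp_pos _).le (Real.exp_pos _) hrpow
      _ = Real.exp (-α * (inner ℝ v y : ℝ) - (1-α) * M y) := by rw [Real.exp_sub]
      _ ≤ Real.exp (-(c * ‖y‖)) := by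
          apply Real.exp_le_exp.mpr
          have h := mul_le_mul_of_nonneg_left (hMlow y) h1α.le
          have heq : (1-α) * (-β * (inner ℝ v y : ℝ) + ε/2 * ‖y‖)
              = -((1-α)*β) * (inner ℝ v y : ℝ) + c * ‖y‖ := by rw [hc]; ring
          rw [heq, hαβ] at h
          linarith
  have hcont : Continuous (fun y : E => Real.exp (-α * (inner ℝ v y : ℝ)) /
      (∑ i, Real.exp (inner ℝ (vs i) y : ℝ)) ^ (1 - α)) := by
    apply Continuous.div
    · exact Real.continuous_exp.comp (continuous_const.mul
        (Continuous.inner continuous_const continuous_id))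
    · apply Continuous.rpow_const
      · exact continuous_finset_sum _ (fun i _ => Real.continuous_exp.comp
          (Continuous.inner continuous_const continuous_id))
      · exact fun y => Or.inr h1α.le
    · exact fun y => (Real.rpow_pos_of_pos (hSpos y) _).ne'
  refine (integrable_exp_neg_mul_norm' hcpos).mono' hcont.aestronglyMeasurable
    (Filter.Eventually.of_forall fun y => ?_)
  rw [Real.norm_eq_abs, abs_of_nonneg (by positivity)]
  exact hbound y

lemma dir2 (vs : Fin (k+1) → E) (v : E) {α : ℝ} (hα : α ∈ Set.Ioo (0:ℝ) 1)
    (w : E) (hw : w ≠ 0)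
    (hsep : ∀ i, (inner ℝ (vs i) w : ℝ) ≤ -(α/(1-α)) * (inner ℝ v w : ℝ)) :
    ¬ Integrable (fun y : E => Real.exp (-α * (inner ℝ v y : ℝ)) /
      (∑ i, Real.exp (inner ℝ (vs i) y : ℝ)) ^ (1 - α)) := by
  obtain ⟨hα0, hα1⟩ := hα
  have h1α : (0:ℝ) < 1 - α := by linarith
  set β := α / (1 - α) with hβ
  have hαβ : (1 - α) * β = α := by rw [hβ]; field_simp
  have hβ0 : 0 ≤ β := by positivity
  set d : E := ‖w‖⁻¹ • w with hd
  have hwn : (0:ℝ) < ‖w‖ := norm_pos_iff.mpr hw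
  have hdn : ‖d‖ = 1 := by
    rw [hd, norm_smul, Real.norm_eq_abs, abs_of_pos (by positivity), inv_mul_cancel₀ hwn.ne']
  set N : ℝ := ∑ i, ‖vs i‖ with hN
  have hNi : ∀ i, ‖vs i‖ ≤ N := fun i =>
    Finset.single_le_sum (f := fun i => ‖vs i‖) (fun i _ => norm_nonneg _) (Finset.mem_univ i)
  set c : ℕ → E := fun m => (2*(m:ℝ)) • d with hc
  set c₀ : ℝ := Real.exp (-(α*‖v‖) - (1-α)*N) * ((k:ℝ)+1) ^ (α-1) with hc₀
  have hc₀pos : 0 < c₀ := by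
    apply mul_pos (Real.exp_pos _)
    exact Real.rpow_pos_of_pos (by positivity) _
  -- key inner ℝ product inequality at centers
  have hkey : ∀ (m : ℕ) i, (inner ℝ (vs i) (c m) : ℝ) ≤ -β * (inner ℝ v (c m) : ℝ) := by
    intro m i
    have hcm : c m = (2*(m:ℝ)*‖w‖⁻¹) • w := by rw [hc]; simp only; rw [hd, smul_smul]
    have hs : (0:ℝ) ≤ 2*(m:ℝ)*‖w‖⁻¹ := by positivity
    rw [hcm, real_inner_smul_right, real_inner_smul_right]
    have := mul_le_mul_of_nonneg_left (hsep i) hs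
    calc 2*(m:ℝ)*‖w‖⁻¹ * (inner ℝ (vs i) w : ℝ)
        ≤ 2*(m:ℝ)*‖w‖⁻¹ * (-β * (inner ℝ v w : ℝ)) := this
      _ = -β * (2*(m:ℝ)*‖w‖⁻¹ * (inner ℝ v w : ℝ)) := by ring
  -- pointwise lower bound on balls
  have hlow : ∀ (m : ℕ), ∀ y ∈ Metric.ball (c m) 1,
      c₀ ≤ Real.exp (-α * (inner ℝ v y : ℝ)) /
        (∑ i, Real.exp (inner ℝ (vs i) y : ℝ)) ^ (1 - α) := by
    intro m y hy
    rw [Metric.mem_ball, dist_eq_norm] at hy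
    set z : E := y - c m with hz
    have hy' : y = c m + z := by rw [hz]; abel
    have hz1 : ‖z‖ ≤ 1 := le_of_lt hy
    set t : ℝ := (inner ℝ v (c m) : ℝ) with ht
    have hnum : Real.exp (-α*t - α*‖v‖) ≤ Real.exp (-α * (inner ℝ v y : ℝ)) := by
      apply Real.exp_le_exp.mpr
      have h1 : (inner ℝ v y : ℝ) = t + (inner ℝ v z : ℝ) := by rw [hy', inner_add_right]
      have h2 : (inner ℝ v z : ℝ) ≤ ‖v‖ := by
        calc (inner ℝ v z : ℝ) ≤ ‖v‖ * ‖z‖ := real_inner_le_norm v z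
          _ ≤ ‖v‖ * 1 := by gcongr
          _ = ‖v‖ := mul_one _
      rw [h1]; nlinarith
    have hden : (∑ i, Real.exp (inner ℝ (vs i) y : ℝ)) ≤ ((k:ℝ)+1) * Real.exp (N - β*t) := by
      have hterm : ∀ i, Real.exp (inner ℝ (vs i) y : ℝ) ≤ Real.exp (N - β*t) := by
        intro i
        apply Real.exp_le_exp.mpr
        have h1 : (inner ℝ (vs i) y : ℝ) = (inner ℝ (vs i) (c m) : ℝ) + (inner ℝ (vs i) z : ℝ) := by
          rw [hy', inner_add_right]
        have h2 : (inner ℝ (vs i) z : ℝ) ≤ N := by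
          calc (inner ℝ (vs i) z : ℝ) ≤ ‖vs i‖ * ‖z‖ := real_inner_le_norm _ z
            _ ≤ N * 1 := by
                apply mul_le_mul (hNi i) hz1 (norm_nonneg _)
                exact le_trans (norm_nonneg _) (hNi i)
            _ = N := mul_one _
        have h3 := hkey m i
        rw [h1]; linarith
      calc (∑ i, Real.exp (inner ℝ (vs i) y : ℝ)) ≤ ∑ _i : Fin (k+1), Real.exp (N - β*t) :=
            Finset.sum_le_sum (fun i _ => hterm i)
        _ = ((k:ℝ)+1) * Real.exp (N - β*t) := by
            rw [Finset.sum_const, Finset.card_univ, Fintype.card_fin, nsmul_eq_mul]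
            push_cast; ring
    have hdpos : (0:ℝ) < ∑ i, Real.exp (inner ℝ (vs i) y : ℝ) :=
      Finset.sum_pos (fun i _ => Real.exp_pos _) Finset.univ_nonempty
    have hrpow : (∑ i, Real.exp (inner ℝ (vs i) y : ℝ)) ^ (1-α)
        ≤ (((k:ℝ)+1) * Real.exp (N - β*t)) ^ (1-α) :=
      Real.rpow_le_rpow hdpos.le hden h1α.le
    have hform : Real.exp (-α*t - α*‖v‖) / (((k:ℝ)+1) * Real.exp (N - β*t)) ^ (1-α) = c₀ := by
      rw [Real.mul_rpow (by positivity) (Real.exp_pos _).le, ← Real.exp_mul]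
      rw [hc₀, eq_comm, eq_div_iff (by positivity)]
      have h2 : ((k:ℝ)+1)^(α-1) * ((k:ℝ)+1)^(1-α) = 1 := by
        rw [← Real.rpow_add (by positivity : (0:ℝ) < (k:ℝ)+1)]; norm_num
      calc Real.exp (-(α*‖v‖) - (1-α)*N) * ((k:ℝ)+1) ^ (α-1) *
            (((k:ℝ)+1) ^ (1-α) * Real.exp ((N - β*t)*(1-α)))
          = Real.exp (-(α*‖v‖) - (1-α)*N) * Real.exp ((N - β*t)*(1-α)) *
            (((k:ℝ)+1)^(α-1) * ((k:ℝ)+1)^(1-α)) := by ring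
        _ = Real.exp (-(α*‖v‖) - (1-α)*N) * Real.exp ((N - β*t)*(1-α)) := by rw [h2, mul_one]
        _ = Real.exp (-(α*‖v‖) - (1-α)*N + (N - β*t)*(1-α)) := (Real.exp_add _ _).symm
        _ = Real.exp (-α*t - α*‖v‖) := by
            congr 1
            linear_combination (-t) * hαβ
    rw [← hform]
    exact div_le_div₀ (Real.exp_pos _).le hnum (Real.rpow_pos_of_pos hdpos _) hrpow
  intro hInt
  have hdisj : Pairwise (Function.onFun Disjoint (fun m : ℕ => Metric.ball (c m) 1)) := by
    intro m m' hne
    apply Metric.ball_disjoint_ball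
    rw [dist_eq_norm]
    have hsub : c m - c m' = ((2*(m:ℝ)) - 2*(m':ℝ)) • d := by
      rw [hc]; simp only; rw [← sub_smul]
    rw [hsub, norm_smul, hdn, mul_one, Real.norm_eq_abs]
    have h1 : (1:ℝ) ≤ |(m:ℝ) - (m':ℝ)| := by
      rcases hne.lt_or_gt with h | h
      · rw [abs_sub_comm, le_abs]; left
        have : (m:ℝ) + 1 ≤ (m':ℝ) := by exact_mod_cast h
        linarith
      · rw [le_abs]; left
        have : (m':ℝ) + 1 ≤ (m:ℝ) := by exact_mod_cast h
        linarith
    have h2 : |2*(m:ℝ) - 2*(m':ℝ)| = 2 * |(m:ℝ) - (m':ℝ)| := by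
      have : 2*(m:ℝ) - 2*(m':ℝ) = 2*((m:ℝ) - (m':ℝ)) := by ring
      rw [this, abs_mul, abs_two]
    linarith
  have hball_meas : ∀ m : ℕ, MeasurableSet (Metric.ball (c m) 1) :=
    fun m => measurableSet_ball
  set U : Set E := ⋃ m : ℕ, Metric.ball (c m) 1 with hU
  have hvol : (volume : Measure E) U = ⊤ := by
    rw [hU, measure_iUnion hdisj hball_meas]
    have heach : ∀ m : ℕ, (volume : Measure E) (Metric.ball (c m) 1)
        = volume (Metric.ball (0:E) 1) := fun m => Measure.addHaar_ball_center volume _ _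
    rw [tsum_congr heach]
    exact ENNReal.tsum_const_eq_top_of_ne_zero
      (Metric.measure_ball_pos volume (0:E) one_pos).ne'
  have h1 : ENNReal.ofReal c₀ * volume U ≤ ∫⁻ y in U, ‖Real.exp (-α * (inner ℝ v y : ℝ)) /
      (∑ i, Real.exp (inner ℝ (vs i) y : ℝ)) ^ (1 - α)‖ₑ := by
    rw [← setLIntegral_const U (ENNReal.ofReal c₀)]
    refine setLIntegral_mono' (MeasurableSet.iUnion hball_meas) (fun y hy => ?_)
    obtain ⟨t, ⟨m, rfl⟩, hym⟩ := hy
    have hFy := hlow m y hym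
    rw [Real.enorm_eq_ofReal (le_trans hc₀pos.le hFy)]
    exact ENNReal.ofReal_le_ofReal hFy
  have h2 := setLIntegral_le_lintegral (μ := (volume : Measure E)) U (fun y => (‖Real.exp (-α * (inner ℝ v y : ℝ)) /
      (∑ i, Real.exp (inner ℝ (vs i) y : ℝ)) ^ (1 - α)‖ₑ : ℝ≥0∞))
  have h3 := hInt.2
  rw [HasFiniteIntegral] at h3
  rw [hvol, ENNReal.mul_top (by simp [hc₀pos] : ENNReal.ofReal c₀ ≠ 0)] at h1
  exact absurd (lt_of_le_of_lt (le_trans h1 h2) h3) (by simp)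

theorem stmt_15 {n k : ℕ} (vs : Fin (k + 1) → EuclideanSpace ℝ (Fin n))
    (S : Set (EuclideanSpace ℝ (Fin n))) (hS : S = convexHull ℝ (Set.range vs))
    (h0 : (0 : EuclideanSpace ℝ (Fin n)) ∈ interior S)
    (hspan : Submodule.span ℝ (Set.range vs) = ⊤)
    (v : EuclideanSpace ℝ (Fin n)) (hv : v ≠ 0)
    (t₀ : ℝ) (ht₀ : t₀ = sSup {t : ℝ | 0 ≤ t ∧ -t • v ∈ S})
    (hbd : -t₀ • v ∈ frontier S)
    (r : ℝ) (hr : r = t₀) :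
    sSup {α : ℝ | α ∈ Set.Ioo (0 : ℝ) 1 ∧
        Integrable (fun y : EuclideanSpace ℝ (Fin n) =>
          Real.exp (-α * (inner ℝ v y : ℝ)) /
            (∑ i, Real.exp (inner ℝ (vs i) y : ℝ)) ^ (1 - α))}
      = r / (1 + r) := by
  subst hr
  subst hS
  set H : Set (EuclideanSpace ℝ (Fin n)) := convexHull ℝ (Set.range vs) with hH
  have hconv : Convex ℝ H := convex_convexHull ℝ _
  have hcpt : IsCompact H := (Set.finite_range vs).isCompact_convexHull (𝕜 := ℝ)
  have hvn : (0:ℝ) < ‖v‖ := norm_pos_iff.mpr hv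
  set T : Set ℝ := {t : ℝ | 0 ≤ t ∧ -t • v ∈ H} with hT
  have hTne : T.Nonempty := by
    refine ⟨0, le_refl 0, ?_⟩
    have h1 : (-(0:ℝ)) • v = 0 := by norm_num
    rw [h1]
    exact interior_subset h0
  obtain ⟨R, hR⟩ := hcpt.isBounded.subset_closedBall 0
  have hTbdd : BddAbove T := by
    refine ⟨R / ‖v‖, fun t ht => ?_⟩
    obtain ⟨ht0, htm⟩ := ht
    have h1 : ‖-t • v‖ ≤ R := by
      have := hR htm
      rwa [Metric.mem_closedBall, dist_zero_right] at this
    rw [norm_smul, Real.norm_eq_abs, abs_neg, abs_of_nonneg ht0] at h1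
    rw [le_div_iff₀ hvn]
    exact h1
  have ht₀pos : 0 < r := by
    obtain ⟨ε, hε, hball⟩ := Metric.mem_nhds_iff.mp (mem_interior_iff_mem_nhds.mp h0)
    have hmem : ε / (2 * ‖v‖) ∈ T := by
      refine ⟨by positivity, hball ?_⟩
      rw [Metric.mem_ball, dist_zero_right, norm_smul, Real.norm_eq_abs, abs_neg,
        abs_of_nonneg (by positivity : (0:ℝ) ≤ ε / (2 * ‖v‖))]
      rw [div_mul_eq_mul_div, mul_comm]
      rw [div_lt_iff₀ (by positivity : (0:ℝ) < 2 * ‖v‖)]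
      nlinarith
    calc (0:ℝ) < ε / (2 * ‖v‖) := by positivity
      _ ≤ r := ht₀ ▸ le_csSup hTbdd hmem
  have hmemint : ∀ γ : ℝ, 0 ≤ γ → γ < r → -γ • v ∈ interior H := by
    intro γ hγ0 hγt
    obtain ⟨s, hsT, hγs⟩ := exists_lt_of_lt_csSup hTne (ht₀ ▸ hγt)
    have hs0 : 0 < s := lt_of_le_of_lt hγ0 hγs
    have hcombo := hconv.combo_interior_self_mem_interior h0 hsT.2
      (a := 1 - γ/s) (b := γ/s)
      (by rw [sub_pos, div_lt_one hs0]; exact hγs) (by positivity) (by ring)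
    have heq : (1 - γ/s) • (0:EuclideanSpace ℝ (Fin n)) + (γ/s) • (-s • v) = -γ • v := by
      rw [smul_zero, zero_add, smul_smul]
      congr 1
      field_simp
    rwa [heq] at hcombo
  have hnotint : ∀ γ : ℝ, r ≤ γ → -γ • v ∉ interior H := by
    intro γ hγ hmem
    have hφ : Continuous (fun t : ℝ => -t • v) := (continuous_neg.smul continuous_const)
    have hopen : IsOpen ((fun t : ℝ => -t • v) ⁻¹' interior H) :=
      isOpen_interior.preimage hφ
    obtain ⟨δ, hδ, hballδ⟩ := Metric.isOpen_iff.mp hopen γ hmem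
    have hmem2 : γ + δ/2 ∈ T := by
      refine ⟨by linarith, interior_subset (hballδ ?_)⟩
      rw [Metric.mem_ball, Real.dist_eq,
        abs_of_nonneg (by linarith : (0:ℝ) ≤ γ + δ/2 - γ)]
      linarith
    have := le_csSup hTbdd hmem2
    rw [← ht₀] at this
    linarith
  have hend0 : 0 < r / (1 + r) := by positivity
  have hend1 : r / (1 + r) < 1 := by
    rw [div_lt_one (by linarith)]; linarith
  have hA : {α : ℝ | α ∈ Set.Ioo (0 : ℝ) 1 ∧
      Integrable (fun y : EuclideanSpace ℝ (Fin n) =>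
        Real.exp (-α * (inner ℝ v y : ℝ)) /
          (∑ i, Real.exp (inner ℝ (vs i) y : ℝ)) ^ (1 - α))}
      = Set.Ioo 0 (r / (1 + r)) := by
    ext α
    simp only [Set.mem_setOf_eq, Set.mem_Ioo]
    constructor
    · rintro ⟨⟨hα0, hα1⟩, hint⟩
      refine ⟨hα0, ?_⟩
      by_contra hcon
      push_neg at hcon
      have h1α : (0:ℝ) < 1 - α := by linarith
      have hβge : r ≤ α / (1 - α) := by
        rw [le_div_iff₀ h1α]
        rw [div_le_iff₀ (by linarith : (0:ℝ) < 1 + r)] at hcon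
        nlinarith
      have hnot : -(α/(1-α)) • v ∉ interior H := hnotint _ hβge
      obtain ⟨f, hf⟩ := geometric_hahn_banach_open_point hconv.interior isOpen_interior hnot
      have hfS : ∀ a ∈ H, f a ≤ f (-(α/(1-α)) • v) := by
        intro a ha
        have hθ : ∀ θ ∈ Set.Ioo (0:ℝ) 1, θ * f a < f (-(α/(1-α)) • v) := by
          intro θ hθm
          have hcombo := hconv.combo_interior_self_mem_interior h0 ha
            (a := 1 - θ) (b := θ) (by linarith [hθm.2]) hθm.1.le (by ring)
          rw [smul_zero, zero_add] at hcombo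
          have := hf _ hcombo
          rwa [f.map_smul, smul_eq_mul] at this
        have htend : Filter.Tendsto (fun θ : ℝ => θ * f a) (nhdsWithin 1 (Set.Iio 1))
            (nhds (f a)) := by
          have h1 : Filter.Tendsto (fun θ : ℝ => θ * f a) (nhds 1) (nhds (1 * f a)) :=
            (continuous_id.mul continuous_const).tendsto 1
          rw [one_mul] at h1
          exact h1.mono_left nhdsWithin_le_nhds
        refine le_of_tendsto htend ?_
        filter_upwards [Ioo_mem_nhdsLT_of_mem (Set.mem_Ioc.mpr ⟨zero_lt_one, le_refl 1⟩)]
          with θ hθm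
        exact (hθ θ hθm).le
      set w : EuclideanSpace ℝ (Fin n) := (InnerProductSpace.toDual ℝ _).symm f with hwdef
      have hwr : ∀ x : EuclideanSpace ℝ (Fin n), (inner ℝ w x : ℝ) = f x := fun x =>
        InnerProductSpace.toDual_symm_apply
      have hw0 : w ≠ 0 := by
        intro hww
        have h1 := hf 0 h0
        have h2 : f 0 = 0 := f.map_zero
        have h3 : f (-(α/(1-α)) • v) = 0 := by
          rw [← hwr, hww, inner_zero_left]
        rw [h2, h3] at h1
        exact lt_irrefl 0 h1
      have hsep : ∀ i, (inner ℝ (vs i) w : ℝ) ≤ -(α/(1-α)) * (inner ℝ v w : ℝ) := by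
        intro i
        have h1 : f (vs i) ≤ f (-(α/(1-α)) • v) :=
          hfS _ (subset_convexHull ℝ _ (Set.mem_range_self i))
        rw [← hwr, ← hwr, real_inner_smul_right] at h1
        have e1 : (inner ℝ (vs i) w : ℝ) = inner ℝ w (vs i) := real_inner_comm _ _
        have e2 : (inner ℝ v w : ℝ) = inner ℝ w v := real_inner_comm _ _
        rw [e1, e2]
        exact h1
      exact absurd hint (dir2 vs v ⟨hα0, hα1⟩ w hw0 hsep)
    · rintro ⟨hα0, hαlt⟩
      have hα1 : α < 1 := lt_trans hαlt hend1
      have h1α : (0:ℝ) < 1 - α := by linarith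
      have hβlt : α / (1 - α) < r := by
        rw [div_lt_iff₀ h1α]
        rw [lt_div_iff₀ (by linarith : (0:ℝ) < 1 + r)] at hαlt
        nlinarith
      exact ⟨⟨hα0, hα1⟩, dir1 vs v ⟨hα0, hα1⟩ (hmemint _ (by positivity) hβlt)⟩
  rw [hA, csSup_Ioo hend0]
end

section
/- Let f : ℝ^n → ℝ be given by f(y) = ∑_{i=0}^k e^{⟨v_i,y⟩} where the convex hull of {v_0,...,v_k} contains the closed ball of radius δ > 0 around 0. Then f(y) ≥ e^{δ|y|} for all y ∈ ℝ^n, and hence ∫_{ℝ^n} f(y)^{-(1-α)} dy < ∞ for every α < 1. -/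
open MeasureTheory Real

lemma aux_exp_integrable {E : Type*} [NormedAddCommGroup E] [NormedSpace ℝ E]
    [MeasurableSpace E] [BorelSpace E] [FiniteDimensional ℝ E] {μ : Measure E}
    [μ.IsAddHaarMeasure] {c : ℝ} (hc : 0 < c) :
    Integrable (fun x : E => Real.exp (-(c * ‖x‖))) μ := by
  set d : ℕ := Module.finrank ℝ E + 1
  have hd : (0:ℝ) < d := by positivity
  set m : ℝ := min 1 (c / d)
  have hm : 0 < m := lt_min one_pos (by positivity)
  have hnr : (Module.finrank ℝ E : ℝ) < (d : ℝ) := by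
    simp [d]
  refine ((integrable_one_add_norm (μ := μ) hnr).const_mul ((m ^ d)⁻¹)).mono'
    ((Real.continuous_exp.comp (continuous_const.mul continuous_norm).neg).aestronglyMeasurable)
    (Filter.Eventually.of_forall fun x => ?_)
  have ht : (0:ℝ) ≤ ‖x‖ := norm_nonneg x
  have key : m ^ d * (1 + ‖x‖) ^ d ≤ Real.exp (c * ‖x‖) := by
    have h1 : m * (1 + ‖x‖) ≤ 1 + c * ‖x‖ / d := by
      have hle : m ≤ 1 := min_le_left 1 (c / d)
      have h2 : m * ‖x‖ ≤ c / d * ‖x‖ :=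
        mul_le_mul_of_nonneg_right (min_le_right _ _) ht
      rw [div_mul_eq_mul_div] at h2
      calc m * (1 + ‖x‖) = m + m * ‖x‖ := by ring
        _ ≤ 1 + c * ‖x‖ / d := add_le_add hle h2
    calc m ^ d * (1 + ‖x‖) ^ d = (m * (1 + ‖x‖)) ^ d := (mul_pow _ _ _).symm
      _ ≤ (1 + c * ‖x‖ / d) ^ d := by
          apply pow_le_pow_left₀ (by positivity) h1
      _ ≤ (Real.exp (c * ‖x‖ / d)) ^ d := by
          apply pow_le_pow_left₀ (by positivity)
          have := Real.add_one_le_exp (c * ‖x‖ / d)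
          linarith
      _ = Real.exp (c * ‖x‖) := by
          rw [← Real.exp_nat_mul]
          congr 1
          field_simp
  have h1x : (0:ℝ) < 1 + ‖x‖ := by positivity
  have heq : (m ^ d)⁻¹ * (1 + ‖x‖) ^ (-(d:ℝ)) = (m ^ d * (1 + ‖x‖) ^ d)⁻¹ := by
    rw [Real.rpow_neg h1x.le, Real.rpow_natCast, mul_inv]
  rw [Real.norm_eq_abs, abs_of_pos (Real.exp_pos _), Real.exp_neg, heq]
  exact inv_anti₀ (by positivity) key

set_option maxHeartbeats 1000000 in
theorem stmt_19 {n k : ℕ} (v : Fin (k + 1) → EuclideanSpace ℝ (Fin n))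
    (δ : ℝ) (hδ : 0 < δ)
    (hball : Metric.closedBall (0 : EuclideanSpace ℝ (Fin n)) δ ⊆
      convexHull ℝ (Set.range v))
    (f : EuclideanSpace ℝ (Fin n) → ℝ)
    (hf : f = fun y => ∑ i, Real.exp (inner ℝ (v i) y : ℝ)) :
    (∀ y, Real.exp (δ * ‖y‖) ≤ f y) ∧
    ∀ α : ℝ, α < 1 →
      Integrable (fun y : EuclideanSpace ℝ (Fin n) => (f y) ^ (-(1 - α))) := by
  subst hf
  have hlb : ∀ y, Real.exp (δ * ‖y‖) ≤ ∑ i, Real.exp (inner ℝ (v i) y : ℝ) := by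
    intro y
    by_cases hy : y = 0
    · subst hy
      simp only [norm_zero, mul_zero, Real.exp_zero, inner_zero_right,
        Finset.sum_const, Finset.card_univ, Fintype.card_fin, nsmul_eq_mul, mul_one]
      exact_mod_cast Nat.succ_le_succ (Nat.zero_le k)
    · set w : EuclideanSpace ℝ (Fin n) := (δ / ‖y‖) • y with hw
      have hny : (0:ℝ) < ‖y‖ := norm_pos_iff.mpr hy
      have hwmem : w ∈ Metric.closedBall (0 : EuclideanSpace ℝ (Fin n)) δ := by
        simp only [Metric.mem_closedBall, dist_zero_right, hw, norm_smul,
          Real.norm_eq_abs, abs_of_pos (div_pos hδ hny)]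
        rw [div_mul_cancel₀ _ hny.ne']
      have hconv : ConvexOn ℝ Set.univ
          (fun x : EuclideanSpace ℝ (Fin n) => Real.exp (inner ℝ x y : ℝ)) := by
        have h := convexOn_exp.comp_linearMap
          (((innerSL ℝ (E := EuclideanSpace ℝ (Fin n))).flip y).toLinearMap)
        rw [Set.preimage_univ] at h
        exact h
      obtain ⟨z, hz, hzle⟩ := hconv.exists_ge_of_mem_convexHull
        (Set.subset_univ _) (hball hwmem)
      obtain ⟨i, rfl⟩ := hz
      have hwin : (inner ℝ w y : ℝ) = δ * ‖y‖ := by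
        rw [hw, real_inner_smul_left, real_inner_self_eq_norm_mul_norm]
        field_simp
      calc Real.exp (δ * ‖y‖) = Real.exp (inner ℝ w y : ℝ) := by rw [hwin]
        _ ≤ Real.exp (inner ℝ (v i) y : ℝ) := hzle
        _ ≤ ∑ j, Real.exp (inner ℝ (v j) y : ℝ) :=
            Finset.single_le_sum (f := fun j => Real.exp (inner ℝ (v j) y : ℝ))
              (fun j _ => (Real.exp_pos _).le) (Finset.mem_univ i)
  refine ⟨hlb, fun α hα => ?_⟩
  have hc : 0 < (1 - α) * δ := mul_pos (by linarith) hδ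
  have hpos : ∀ y, (0:ℝ) < ∑ i, Real.exp (inner ℝ (v i) y : ℝ) :=
    fun y => lt_of_lt_of_le (Real.exp_pos _) (hlb y)
  have hcont : Continuous (fun y : EuclideanSpace ℝ (Fin n) =>
      ∑ i, Real.exp (inner ℝ (v i) y : ℝ)) := by
    apply continuous_finset_sum
    intro i _
    exact (Real.continuous_exp).comp (continuous_const.inner continuous_id)
  refine (aux_exp_integrable hc).mono'
    ((hcont.rpow_const fun x => Or.inl (hpos x).ne').aestronglyMeasurable)
    (Filter.Eventually.of_forall fun y => ?_)
  rw [Real.norm_eq_abs, abs_of_pos (Real.rpow_pos_of_pos (hpos y) _)]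
  calc (∑ i, Real.exp (inner ℝ (v i) y : ℝ)) ^ (-(1 - α))
      ≤ Real.exp (δ * ‖y‖) ^ (-(1 - α)) :=
        Real.rpow_le_rpow_of_nonpos (Real.exp_pos _) (hlb y) (by linarith)
    _ = Real.exp (-((1 - α) * δ * ‖y‖)) := by
        rw [← Real.exp_mul]; ring_nf
end
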